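/- For |t|<1, the power series t · F(t) with F(t) = Σ_{m,n≥0} (1/3)_{m+n}/(4/3)_{m+n} · (1/3)_n(1/3)_n/((2/3)_n n! m!) · (1)_m · t^{3n+3m} is a primitive (antiderivative with constant term 0) of (1/(1−t³))·₂F₁(1/3,1/3;2/3;t³), i.e. d/dt [t·F(t)] = (1−t³)^{−1} ₂F₁(1/3,1/3;2/3;t³). -/

import Mathlib

open scoped BigOperators

/-- The Pochhammer symbol `(a)ₙ = a(a+1)⋯(a+n−1)`. -/
noncomputable def poch (a : ℂ) (n : ℕ) : ℂ := ∏ i ∈ Finset.range n, (a + i)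

/-- The Gauss hypergeometric series `₂F₁(a,b;c;x) = Σ (a)ₙ(b)ₙ/((c)ₙ n!) xⁿ`. -/
noncomputable def F21 (a b c x : ℂ) : ℂ :=
  ∑' n : ℕ, poch a n * poch b n / (poch c n * (n.factorial : ℂ)) * x ^ n

/-- `F(t) = Σ_{m,n≥0} (1/3)_{m+n}/(4/3)_{m+n} · (1/3)ₙ(1/3)ₙ/((2/3)ₙ n! m!) · (1)ₘ · t^{3n+3m}`,
summed over `p = (m, n) : ℕ × ℕ`. -/
noncomputable def kampeF (t : ℂ) : ℂ :=
  ∑' p : ℕ × ℕ,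
    poch (1/3) (p.1 + p.2) / poch (4/3) (p.1 + p.2)
      * (poch (1/3) p.2 * poch (1/3) p.2)
        / (poch (2/3) p.2 * (p.2.factorial : ℂ) * (p.1.factorial : ℂ))
      * poch 1 p.1 * t ^ (3 * p.2 + 3 * p.1)

set_option maxHeartbeats 1000000
/-! auxiliary -/

noncomputable def pochR (a : ℝ) (n : ℕ) : ℝ := ∏ i ∈ Finset.range n, (a + i)

lemma poch_ofReal (a : ℝ) (n : ℕ) : poch (a : ℂ) n = ((pochR a n : ℝ) : ℂ) := by
  simp [poch, pochR]

lemma pochR_pos {a : ℝ} (ha : 0 < a) (n : ℕ) : 0 < pochR a n := by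
  apply Finset.prod_pos
  intro i _
  positivity

lemma pochR_mono {a b : ℝ} (ha : 0 < a) (hab : a ≤ b) (n : ℕ) : pochR a n ≤ pochR b n := by
  apply Finset.prod_le_prod
  · intro i _; positivity
  · intro i _; linarith

lemma pochR_one (n : ℕ) : pochR 1 n = (n.factorial : ℝ) := by
  rw [pochR, ← Finset.prod_range_add_one_eq_factorial n]
  push_cast
  exact Finset.prod_congr rfl (fun i _ => by ring)

lemma poch_one_eq (m : ℕ) : poch 1 m = (m.factorial : ℂ) := by
  have := poch_ofReal 1 m
  norm_num at this
  rw [this, pochR_one]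
  norm_num

lemma poch_pos_ne {a : ℝ} (ha : 0 < a) (n : ℕ) : poch (a : ℂ) n ≠ 0 := by
  rw [poch_ofReal]
  exact_mod_cast (pochR_pos ha n).ne'

lemma poch_third_ratio (k : ℕ) :
    poch (4/3) k = (3 * (k : ℂ) + 1) * poch (1/3) k := by
  induction k with
  | zero => simp [poch]
  | succ k ih =>
    have h1 : poch (4/3) (k+1) = poch (4/3) k * (4/3 + k) := by
      simp [poch, Finset.prod_range_succ]
    have h2 : poch (1/3) (k+1) = poch (1/3) k * (1/3 + k) := by
      simp [poch, Finset.prod_range_succ]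
    rw [h1, h2, ih]
    push_cast
    ring

noncomputable def aa (n : ℕ) : ℂ :=
  poch (1/3) n * poch (1/3) n / (poch (2/3) n * (n.factorial : ℂ))

noncomputable def SS (k : ℕ) : ℂ := ∑ n ∈ Finset.range (k+1), aa n

lemma norm_aa_le (n : ℕ) : ‖aa n‖ ≤ 1 := by
  have h13 : poch ((1:ℂ)/3) n = ((pochR (1/3) n : ℝ) : ℂ) := by
    have := poch_ofReal (1/3) n; norm_num at this ⊢; exact this
  have h23 : poch ((2:ℂ)/3) n = ((pochR (2/3) n : ℝ) : ℂ) := by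
    have := poch_ofReal (2/3) n; norm_num at this ⊢; exact this
  have p13 := pochR_pos (by norm_num : (0:ℝ) < 1/3) n
  have p23 := pochR_pos (by norm_num : (0:ℝ) < 2/3) n
  have pf : (0:ℝ) < n.factorial := by positivity
  have key : aa n = (((pochR (1/3) n * pochR (1/3) n / (pochR (2/3) n * n.factorial)) : ℝ) : ℂ) := by
    rw [aa, h13, h23]
    push_cast
    ring
  rw [key]
  rw [Complex.norm_real, Real.norm_eq_abs, abs_of_nonneg (by positivity)]
  rw [div_le_one (by positivity)]
  have m1 : pochR (1/3) n ≤ pochR (2/3) n := pochR_mono (by norm_num) (by norm_num) n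
  have m2 : pochR (1/3) n ≤ (n.factorial : ℝ) := by
    rw [← pochR_one]
    exact pochR_mono (by norm_num) (by norm_num) n
  calc pochR (1/3) n * pochR (1/3) n ≤ pochR (2/3) n * (n.factorial : ℝ) :=
        mul_le_mul m1 m2 p13.le p23.le
    _ = _ := rfl

lemma norm_SS_le (k : ℕ) : ‖SS k‖ ≤ (k : ℝ) + 1 := by
  calc ‖SS k‖ ≤ ∑ n ∈ Finset.range (k+1), ‖aa n‖ := norm_sum_le _ _
    _ ≤ ∑ _n ∈ Finset.range (k+1), (1:ℝ) := Finset.sum_le_sum (fun n _ => norm_aa_le n)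
    _ = (k : ℝ) + 1 := by simp

/-- The summand of `kampeF` in simplified form. -/
noncomputable def cf (p : ℕ × ℕ) : ℂ := (3 * ((p.1 + p.2 : ℕ) : ℂ) + 1)⁻¹ * aa p.2

lemma kampeF_term_eq (p : ℕ × ℕ) (s : ℂ) :
    poch (1/3) (p.1 + p.2) / poch (4/3) (p.1 + p.2)
      * (poch (1/3) p.2 * poch (1/3) p.2)
        / (poch (2/3) p.2 * (p.2.factorial : ℂ) * (p.1.factorial : ℂ))
      * poch 1 p.1 * s ^ (3 * p.2 + 3 * p.1)
    = cf p * s ^ (3 * (p.1 + p.2)) := by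
  obtain ⟨m, n⟩ := p
  have h1 : poch ((1:ℂ)/3) (m + n) ≠ 0 := by
    have := poch_pos_ne (by norm_num : (0:ℝ) < 1/3) (m+n); norm_num at this ⊢; exact this
  have h4 : poch ((4:ℂ)/3) (m + n) ≠ 0 := by
    have := poch_pos_ne (by norm_num : (0:ℝ) < 4/3) (m+n); norm_num at this ⊢; exact this
  have h2 : poch ((2:ℂ)/3) n ≠ 0 := by
    have := poch_pos_ne (by norm_num : (0:ℝ) < 2/3) n; norm_num at this ⊢; exact this
  have hfn : ((n.factorial : ℂ)) ≠ 0 := Nat.cast_ne_zero.2 n.factorial_ne_zero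
  have hfm : ((m.factorial : ℂ)) ≠ 0 := Nat.cast_ne_zero.2 m.factorial_ne_zero
  have hk : (3 * ((m + n : ℕ) : ℂ) + 1) ≠ 0 := by
    have : ((3 * (m+n) + 1 : ℕ) : ℂ) ≠ 0 := Nat.cast_ne_zero.2 (by omega)
    push_cast at this
    convert this using 2 <;> push_cast <;> ring
  have hratio := poch_third_ratio (m + n)
  have hexp : 3 * n + 3 * m = 3 * (m + n) := by ring
  rw [hexp, poch_one_eq, cf, aa]
  simp only
  rw [hratio]
  have e1 : poch (1/3) (m+n) / ((3 * ((m + n : ℕ) : ℂ) + 1) * poch (1/3) (m+n))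
      = (3 * ((m + n : ℕ) : ℂ) + 1)⁻¹ := by
    rw [mul_comm, div_mul_cancel_left₀ h1]
  rw [e1]
  have hk' : 3 * ((m:ℂ) + n) + 1 ≠ 0 := by push_cast at hk; exact hk
  field_simp

lemma kampeF_eq_tsum (s : ℂ) :
    kampeF s = ∑' p : ℕ × ℕ, cf p * s ^ (3 * (p.1 + p.2)) := by
  rw [kampeF]
  exact tsum_congr fun p => kampeF_term_eq p s

lemma norm_cf_le (p : ℕ × ℕ) : ‖cf p‖ ≤ 1 := by
  rw [cf]
  have h1 : ‖(3 * ((p.1 + p.2 : ℕ) : ℂ) + 1)⁻¹‖ ≤ 1 := by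
    rw [norm_inv]
    rw [inv_le_one_iff₀]
    right
    have : (3 * ((p.1 + p.2 : ℕ) : ℂ) + 1) = ((3 * (p.1 + p.2) + 1 : ℕ) : ℂ) := by push_cast; ring
    rw [this, Complex.norm_natCast]
    exact_mod_cast Nat.one_le_iff_ne_zero.2 (by omega)
  calc ‖_ * aa p.2‖ = _ * ‖aa p.2‖ := norm_mul _ _
    _ ≤ 1 * 1 := mul_le_mul h1 (norm_aa_le _) (norm_nonneg _) zero_le_one
    _ = 1 := by norm_num

lemma summable_kampe {s : ℂ} (hs : ‖s‖ < 1) :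
    Summable (fun p : ℕ × ℕ => cf p * s ^ (3 * (p.1 + p.2))) := by
  have hgeom : Summable (fun m : ℕ => ‖(‖s‖ ^ (3 * m) : ℝ)‖) := by
    have h3 : ‖s‖ ^ 3 < 1 := pow_lt_one₀ (norm_nonneg s) hs (by norm_num)
    simp only [pow_mul]
    simpa [abs_of_nonneg (pow_nonneg (pow_nonneg (norm_nonneg s) 3) _)] using
      summable_geometric_of_lt_one (pow_nonneg (norm_nonneg s) 3) h3
  have hprod : Summable (fun p : ℕ × ℕ => ‖s‖ ^ (3 * p.1) * ‖s‖ ^ (3 * p.2)) :=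
    summable_mul_of_summable_norm hgeom hgeom
  apply Summable.of_norm_bounded hprod
  intro p
  rw [norm_mul, norm_pow]
  calc ‖cf p‖ * ‖s‖ ^ (3 * (p.1 + p.2)) ≤ 1 * ‖s‖ ^ (3 * (p.1 + p.2)) := by
        apply mul_le_mul_of_nonneg_right (norm_cf_le p) (by positivity)
    _ = ‖s‖ ^ (3 * p.1) * ‖s‖ ^ (3 * p.2) := by rw [one_mul, ← pow_add]; ring_nf

lemma kampeF_eq_single (s : ℂ) (hs : ‖s‖ < 1) :
    kampeF s = ∑' k : ℕ, (3 * (k : ℂ) + 1)⁻¹ * SS k * s ^ (3 * k) := by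
  rw [kampeF_eq_tsum]
  have hsum := summable_kampe hs
  have hsig : Summable (fun x : Σ n : ℕ, {p // p ∈ Finset.HasAntidiagonal.antidiagonal n} =>
      cf (x.2 : ℕ × ℕ) * s ^ (3 * ((x.2 : ℕ × ℕ).1 + (x.2 : ℕ × ℕ).2))) :=
    Finset.HasAntidiagonal.sigmaAntidiagonalEquivProd.summable_iff.2 hsum
  calc ∑' p : ℕ × ℕ, cf p * s ^ (3 * (p.1 + p.2))
      = ∑' x : Σ n : ℕ, {p // p ∈ Finset.HasAntidiagonal.antidiagonal n},
          cf (x.2 : ℕ × ℕ) * s ^ (3 * ((x.2 : ℕ × ℕ).1 + (x.2 : ℕ × ℕ).2)) :=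
        (Finset.HasAntidiagonal.sigmaAntidiagonalEquivProd.tsum_eq
          (fun p : ℕ × ℕ => cf p * s ^ (3 * (p.1 + p.2)))).symm
    _ = ∑' (k : ℕ) (c : {p // p ∈ Finset.HasAntidiagonal.antidiagonal k}),
          cf (c : ℕ × ℕ) * s ^ (3 * ((c : ℕ × ℕ).1 + (c : ℕ × ℕ).2)) := Summable.tsum_sigma hsig
    _ = ∑' k : ℕ, ∑ p ∈ Finset.HasAntidiagonal.antidiagonal k, cf p * s ^ (3 * (p.1 + p.2)) :=
        tsum_congr fun k => Finset.tsum_subtype (Finset.HasAntidiagonal.antidiagonal k)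
          (fun p : ℕ × ℕ => cf p * s ^ (3 * (p.1 + p.2)))
    _ = ∑' k : ℕ, (3 * (k : ℂ) + 1)⁻¹ * SS k * s ^ (3 * k) := by
        apply tsum_congr
        intro k
        have step1 : ∑ p ∈ Finset.HasAntidiagonal.antidiagonal k, cf p * s ^ (3 * (p.1 + p.2))
            = ∑ p ∈ Finset.HasAntidiagonal.antidiagonal k, (3 * (k : ℂ) + 1)⁻¹ * aa p.2 * s ^ (3 * k) := by
          apply Finset.sum_congr rfl
          intro p hp
          rw [Finset.HasAntidiagonal.mem_antidiagonal] at hp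
          rw [cf, hp]
        rw [step1]
        rw [Finset.Nat.sum_antidiagonal_eq_sum_range_succ
          (fun a b => (3 * (k : ℂ) + 1)⁻¹ * aa b * s ^ (3 * k)) k]
        have step2 : ∑ j ∈ Finset.range (k+1), (3 * (k : ℂ) + 1)⁻¹ * aa (k - j) * s ^ (3 * k)
            = ∑ j ∈ Finset.range (k+1), (3 * (k : ℂ) + 1)⁻¹ * aa j * s ^ (3 * k) := by
          rw [← Finset.sum_range_reflect
            (fun j => (3 * (k : ℂ) + 1)⁻¹ * aa j * s ^ (3 * k)) (k+1)]
          apply Finset.sum_congr rfl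
          intro j hj
          rw [Finset.mem_range] at hj
          have hj' : k + 1 - 1 - j = k - j := by omega
          rw [hj']
        rw [step2, ← Finset.sum_mul, ← Finset.mul_sum, SS]

lemma summable_u {x : ℝ} (h0 : 0 ≤ x) (h1 : x < 1) :
    Summable (fun k : ℕ => ((k : ℝ) + 1) * x ^ k) := by
  have ha : Summable (fun k : ℕ => (k : ℝ) ^ 1 * x ^ k) :=
    summable_pow_mul_geometric_of_norm_lt_one 1
      (by rwa [Real.norm_eq_abs, abs_of_nonneg h0])
  have hb : Summable (fun k : ℕ => x ^ k) := summable_geometric_of_lt_one h0 h1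
  have := ha.add hb
  apply this.congr
  intro k
  ring

lemma summable_SS_mul {x : ℂ} (hx : ‖x‖ < 1) : Summable (fun k : ℕ => SS k * x ^ k) := by
  apply Summable.of_norm_bounded (summable_u (norm_nonneg x) hx)
  intro k
  rw [norm_mul, norm_pow]
  exact mul_le_mul_of_nonneg_right (norm_SS_le k) (by positivity)

lemma summable_aa_mul {x : ℂ} (hx : ‖x‖ < 1) : Summable (fun n : ℕ => aa n * x ^ n) := by
  apply Summable.of_norm_bounded (summable_geometric_of_lt_one (norm_nonneg x) hx)
  intro n
  rw [norm_mul, norm_pow]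
  calc ‖aa n‖ * ‖x‖ ^ n ≤ 1 * ‖x‖ ^ n :=
        mul_le_mul_of_nonneg_right (norm_aa_le n) (by positivity)
    _ = ‖x‖ ^ n := one_mul _

lemma final_id {t : ℂ} (ht : ‖t‖ < 1) :
    ∑' k : ℕ, SS k * t ^ (3 * k) = (1 - t ^ 3)⁻¹ * F21 (1/3) (1/3) (2/3) (t ^ 3) := by
  have hx : ‖t ^ 3‖ < 1 := by
    rw [norm_pow]
    exact pow_lt_one₀ (norm_nonneg t) ht (by norm_num)
  set x := t ^ 3 with hxdef
  have hxe : ∀ k : ℕ, t ^ (3 * k) = x ^ k := fun k => pow_mul t 3 k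
  simp only [hxe]
  have h1 : Summable (fun k : ℕ => SS k * x ^ k) := summable_SS_mul hx
  have h1' : Summable (fun k : ℕ => SS (k+1) * x ^ (k+1)) := by
    exact_mod_cast (summable_nat_add_iff 1).2 h1
  have h2 : Summable (fun k : ℕ => SS k * x ^ (k+1)) := by
    apply (h1.mul_left x).congr
    intro k; ring
  have haa : Summable (fun n : ℕ => aa n * x ^ n) := summable_aa_mul hx
  have key : (1 - x) * (∑' k : ℕ, SS k * x ^ k) = F21 (1/3) (1/3) (2/3) x := by
    have hF : F21 (1/3) (1/3) (2/3) x = ∑' n : ℕ, aa n * x ^ n := by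
      rw [F21]; exact tsum_congr fun n => by rw [aa]
    rw [hF, sub_mul, one_mul, ← tsum_mul_left]
    have e2 : ∑' k : ℕ, x * (SS k * x ^ k) = ∑' k : ℕ, SS k * x ^ (k+1) :=
      tsum_congr fun k => by ring
    rw [e2, Summable.tsum_eq_zero_add h1, Summable.tsum_eq_zero_add haa, add_sub_assoc, ← Summable.tsum_sub h1' h2]
    congr 1
    · rw [SS]; simp
    · apply tsum_congr
      intro k
      have : SS (k+1) = SS k + aa (k+1) := by
        rw [SS, SS, Finset.sum_range_succ]
      rw [this]
      ring
  have hne : (1 : ℂ) - x ≠ 0 := by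
    intro h
    have : x = 1 := by linear_combination -h
    rw [this] at hx
    norm_num at hx
  rw [← key, inv_mul_cancel_left₀ hne]

/-- For `|t| < 1`, `t·F(t)` is a primitive of `(1−t³)⁻¹·₂F₁(1/3,1/3;2/3;t³)`:
`d/dt [t·F(t)] = (1−t³)⁻¹ ₂F₁(1/3,1/3;2/3;t³)`. -/
theorem primitive_one (t : ℂ) (ht : ‖t‖ < 1) :
    HasDerivAt (fun s : ℂ => s * kampeF s)
      ((1 - t ^ 3)⁻¹ * F21 (1/3) (1/3) (2/3) (t ^ 3)) t := by
  set r : ℝ := (1 + ‖t‖) / 2 with hrdef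
  have hr0 : 0 < r := by positivity
  have htr : ‖t‖ < r := by rw [hrdef]; linarith
  have hr1 : r < 1 := by rw [hrdef]; linarith
  set g : ℕ → ℂ → ℂ := fun k s => (3 * (k : ℂ) + 1)⁻¹ * SS k * s ^ (3 * k + 1) with hgdef
  set g' : ℕ → ℂ → ℂ := fun k y => SS k * y ^ (3 * k) with hg'def
  set u : ℕ → ℝ := fun k => ((k : ℝ) + 1) * (r ^ 3) ^ k with hudef
  have hk_ne : ∀ k : ℕ, (3 * (k : ℂ) + 1) ≠ 0 := by
    intro k
    have : ((3 * k + 1 : ℕ) : ℂ) ≠ 0 := Nat.cast_ne_zero.2 (by omega)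
    push_cast at this
    exact this
  have hu : Summable u := by
    apply summable_u (by positivity)
    have h2 : r ^ 2 ≤ 1 := pow_le_one₀ hr0.le hr1.le
    calc r ^ 3 ≤ r := by nlinarith
      _ < 1 := hr1
  have hderiv : ∀ (k : ℕ), ∀ y ∈ Metric.ball (0 : ℂ) r, HasDerivAt (g k) (g' k y) y := by
    intro k y _
    have h := (hasDerivAt_pow (3 * k + 1) y).const_mul ((3 * (k : ℂ) + 1)⁻¹ * SS k)
    refine h.congr_deriv ?_
    rw [hg'def]
    simp only [Nat.add_sub_cancel]
    push_cast
    rw [show (3*(k:ℂ)+1)⁻¹ * SS k * ((3*(k:ℂ)+1) * y ^ (3*k))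
        = ((3*(k:ℂ)+1)⁻¹ * (3*(k:ℂ)+1)) * (SS k * y ^ (3*k)) by ring,
      inv_mul_cancel₀ (hk_ne k), one_mul]
  have hbound : ∀ (k : ℕ), ∀ y ∈ Metric.ball (0 : ℂ) r, ‖g' k y‖ ≤ u k := by
    intro k y hy
    rw [Metric.mem_ball, dist_zero_right] at hy
    rw [hg'def]
    simp only
    rw [norm_mul, norm_pow]
    calc ‖SS k‖ * ‖y‖ ^ (3 * k) ≤ ((k : ℝ) + 1) * r ^ (3 * k) := by
          apply mul_le_mul (norm_SS_le k) (pow_le_pow_left₀ (norm_nonneg y) hy.le _)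
            (by positivity) (by positivity)
      _ = u k := by rw [hudef]; simp only; rw [← pow_mul]
  have hsum0 : Summable (fun k => g k (0 : ℂ)) := by
    have : (fun k => g k (0 : ℂ)) = fun _ => (0 : ℂ) := by
      funext k
      rw [hgdef]
      simp
    rw [this]
    exact summable_zero
  have hmain : HasDerivAt (fun z : ℂ => ∑' k : ℕ, g k z) (∑' k : ℕ, g' k t) t := by
    apply hasDerivAt_tsum_of_isPreconnected hu Metric.isOpen_ball
      (convex_ball (0:ℂ) r).isPreconnected hderiv hbound
      (Metric.mem_ball_self hr0) hsum0
    rw [Metric.mem_ball, dist_zero_right]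
    exact htr
  have heq : (fun s : ℂ => s * kampeF s) =ᶠ[nhds t] (fun z : ℂ => ∑' k : ℕ, g k z) := by
    have hball : Metric.ball (0:ℂ) 1 ∈ nhds t :=
      Metric.isOpen_ball.mem_nhds (by rw [Metric.mem_ball, dist_zero_right]; exact ht)
    apply Filter.eventuallyEq_of_mem hball
    intro s hs
    rw [Metric.mem_ball, dist_zero_right] at hs
    simp only
    rw [kampeF_eq_single s hs, ← tsum_mul_left]
    apply tsum_congr
    intro k
    rw [hgdef]
    simp only
    rw [pow_succ]
    ring
  have hval : ∑' k : ℕ, g' k t = (1 - t ^ 3)⁻¹ * F21 (1/3) (1/3) (2/3) (t ^ 3) := by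
    rw [hg'def]
    exact final_id ht
  rw [← hval]
  exact hmain.congr_of_eventuallyEq heq
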